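/- Let ε be a 1-cochain on the edges of the n-cube I^n and ε' a 1-cochain on the edges of the n'-cube I^{n'}, both with values in the units of a commutative ring. Define a 1-cochain ε″ on I^{n+n'} = I^n × I^{n'} by ε″(ζ,ξ') = ε(ζ) for edges in the first factor and ε″(ξ,ζ') = (−1)^{‖ξ‖} ε'(ζ') for edges in the second factor, where ‖ξ‖ is the number of 1's in ξ. Then for every mixed 2-face S of I^{n+n'} (spanned by one edge direction from each factor), the multiplicative coboundary satisfies δε″(S) = −1. -/
import Mathlib


/-- The weight `‖ξ‖` of a cube vertex: the number of coordinates equal to `1`. -/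
def cubeWeight {n : ℕ} (ξ : Fin n → Bool) : ℕ :=
  (Finset.univ.filter (fun k => ξ k = true)).card

lemma cubeWeight_update {n : ℕ} (ξ : Fin n → Bool) (i : Fin n) (hi : ξ i = false) :
    cubeWeight (Function.update ξ i true) = cubeWeight ξ + 1 := by
  unfold cubeWeight
  have h : (Finset.univ.filter (fun k => Function.update ξ i true k = true)) =
      insert i (Finset.univ.filter (fun k => ξ k = true)) := by
    ext k
    by_cases hk : k = i <;> simp [Function.update, hk, hi]
  rw [h, Finset.card_insert_of_notMem (by simp [hi])]

lemma aux_cancel2 {G : Type*} [CommGroup G] (a b : G) :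
    a * b * a⁻¹ * b⁻¹ = 1 := by
  rw [mul_comm a b, mul_assoc b a a⁻¹, mul_inv_cancel, mul_one, mul_inv_cancel]

lemma aux_cancel {G : Type*} [CommGroup G] (a b c : G) :
    a * (c * b) * a⁻¹ * b⁻¹ = c := by
  rw [mul_comm a (c * b), mul_assoc (c * b) a a⁻¹, mul_inv_cancel, mul_one,
    mul_assoc, mul_inv_cancel, mul_one]

/-- Let `ε`, `ε'` be unit-valued 1-cochains on `I^n`, `I^{n'}` (an edge is encoded by its
initial vertex `ξ` and its direction `i` with `ξ i = 0`). On the product cube define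
`ε″(ζ,ξ') = ε(ζ)` on first-factor edges and `ε″(ξ,ζ') = (-1)^{‖ξ‖} ε'(ζ')` on second-factor
edges. Then on every mixed 2-face `S` (base vertex `(ξ,ξ')`, directions `i` and `j`) the
multiplicative coboundary `δε″(S) = ε″(ζ_{*0}) ε″(ζ_{1*}) ε″(ζ_{*1})⁻¹ ε″(ζ_{0*})⁻¹`
equals `-1`. -/
theorem mixed_face_coboundary {R : Type*} [CommRing R] {n n' : ℕ}
    (ε : (Fin n → Bool) → Fin n → Rˣ) (ε' : (Fin n' → Bool) → Fin n' → Rˣ)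
    (ξ : Fin n → Bool) (ξ' : Fin n' → Bool) (i : Fin n) (j : Fin n')
    (hi : ξ i = false) (hj : ξ' j = false) :
    (ε ξ i) *
      ((-1 : Rˣ) ^ cubeWeight (Function.update ξ i true) * ε' ξ' j) *
      (ε ξ i)⁻¹ *
      ((-1 : Rˣ) ^ cubeWeight ξ * ε' ξ' j)⁻¹ = -1 := by
  rw [cubeWeight_update ξ i hi, pow_succ]
  have h : (-1 : Rˣ) ^ cubeWeight ξ * -1 * ε' ξ' j
      = (-1 : Rˣ) * ((-1 : Rˣ) ^ cubeWeight ξ * ε' ξ' j) := by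
    rw [mul_comm ((-1 : Rˣ) ^ cubeWeight ξ) (-1 : Rˣ), mul_assoc]
  rw [h, ← mul_assoc (ε ξ i) (-1 : Rˣ), mul_comm (ε ξ i) (-1 : Rˣ),
    mul_assoc (-1 : Rˣ), mul_assoc (-1 : Rˣ), mul_assoc (-1 : Rˣ),
    aux_cancel2, mul_one]
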